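/- arXiv:math-ph/0310021 — 4 statements merged into one kernel-verified Lean document; each statement's English description precedes it below -/
import Mathlib

section
/- Let z_s denote the unique real root of 4z³ − 5z² + 3z − 1 (which lies in (1/2,1)). Consider real variables (a_0, b_0, V_0) with F_b := (b_0 + 1)² + V_0² > 0, and set x := a_0 + V_0. Then the system of equations a_0 + x/(x² + 1) = 0, (b_0 + 1)·(1 − 1/F_b) = 0, V_0·(1 − 1/F_b) + x/(1 + x²) = 0 holds if and only if (a_0, b_0, V_0) is one of the four points: S_1 = (0, 0, 0); S_2 = (0, −2, 0); S_3 = ((z_s − 1)/√z_s, −1, √z_s); S_4 = (−(z_s − 1)/√z_s, −1, −√z_s). -/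
/-- let `z_s` be the unique real root of `4z³ - 5z² + 3z - 1`
(it lies in `(1/2, 1)`). For real `(a₀, b₀, V₀)` with
`F_b = (b₀+1)² + V₀² > 0` and `x = a₀ + V₀`, the saddle point system
`a₀ + x/(x²+1) = 0`, `(b₀+1)(1 - 1/F_b) = 0`, `V₀(1 - 1/F_b) + x/(1+x²) = 0`
holds iff `(a₀, b₀, V₀)` is one of the four critical points
`S₁ = (0,0,0)`, `S₂ = (0,-2,0)`, `S₃ = ((z_s-1)/√z_s, -1, √z_s)`,
`S₄ = (-(z_s-1)/√z_s, -1, -√z_s)`. -/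
theorem flip_saddle_points (zs : ℝ)
    (hzs : 4 * zs ^ 3 - 5 * zs ^ 2 + 3 * zs - 1 = 0)
    (a0 b0 V0 : ℝ) (hFb : 0 < (b0 + 1) ^ 2 + V0 ^ 2) :
    (a0 + (a0 + V0) / ((a0 + V0) ^ 2 + 1) = 0 ∧
     (b0 + 1) * (1 - 1 / ((b0 + 1) ^ 2 + V0 ^ 2)) = 0 ∧
     V0 * (1 - 1 / ((b0 + 1) ^ 2 + V0 ^ 2)) +
       (a0 + V0) / (1 + (a0 + V0) ^ 2) = 0) ↔
    ((a0, b0, V0) = (0, 0, 0) ∨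
     (a0, b0, V0) = (0, -2, 0) ∨
     (a0, b0, V0) = ((zs - 1) / Real.sqrt zs, -1, Real.sqrt zs) ∨
     (a0, b0, V0) = (-((zs - 1) / Real.sqrt zs), -1, -Real.sqrt zs)) := by
  have hzs1 : (1:ℝ)/2 < zs := by
    nlinarith [sq_nonneg (2*zs - 3/4), sq_nonneg zs, sq_nonneg (zs - 1/2)]
  have hzs0 : (0:ℝ) < zs := by linarith
  set s := Real.sqrt zs with hs_def
  have hs2 : s ^ 2 = zs := Real.sq_sqrt hzs0.le
  have hspos : 0 < s := Real.sqrt_pos.mpr hzs0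
  have hsne : s ≠ 0 := ne_of_gt hspos
  have hzss : 4 * (s^2) ^ 3 - 5 * (s^2) ^ 2 + 3 * (s^2) - 1 = 0 := by rw [hs2]; exact hzs
  have huniq : ∀ z : ℝ, 4 * z ^ 3 - 5 * z ^ 2 + 3 * z - 1 = 0 → z = zs := by
    intro z hz
    have hQ : 0 < 4*(z^2+z*zs+zs^2) - 5*(z+zs) + 3 := by
      nlinarith [sq_nonneg (z - zs), sq_nonneg (z + zs - 1), sq_nonneg (z + zs - 3/2),
        sq_nonneg (3*(z+zs) - 5/2)]
    have h0 : (z - zs) * (4*(z^2+z*zs+zs^2) - 5*(z+zs) + 3) = 0 := by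
      linear_combination hz - hzs
    rcases mul_eq_zero.mp h0 with h | h
    · linarith
    · exact absurd h (ne_of_gt hQ)
  constructor
  · rintro ⟨h1, h2, h3⟩
    by_cases hF : (b0 + 1) ^ 2 + V0 ^ 2 = 1
    · -- F_b = 1 case
      rw [hF] at h3
      simp only [div_one] at h3
      have hx0 : a0 + V0 = 0 := by
        have h3' : (a0 + V0) / (1 + (a0 + V0) ^ 2) = 0 := by linarith
        have hd : (1 + (a0 + V0) ^ 2) ≠ 0 := by positivity
        exact (div_eq_zero_iff.mp h3').resolve_right hd
      rw [hx0] at h1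
      simp at h1
      have hV0 : V0 = 0 := by linarith
      have hb1 : (b0 + 1) ^ 2 = 1 := by
        rw [hV0] at hF; linarith [hF]
      have hb : b0 = 0 ∨ b0 = -2 := by
        have hbb : (b0 - 0) * (b0 + 2) = 0 := by nlinarith [hb1]
        rcases mul_eq_zero.mp hbb with h | h
        · left; linarith
        · right; linarith
      rcases hb with hb | hb
      · left; rw [Prod.mk.injEq, Prod.mk.injEq]; exact ⟨h1, hb, hV0⟩
      · right; left; rw [Prod.mk.injEq, Prod.mk.injEq]; exact ⟨h1, hb, hV0⟩
    · -- b0 = -1 case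
      have hfac : 1 - 1 / ((b0 + 1) ^ 2 + V0 ^ 2) ≠ 0 := by
        intro h
        apply hF
        field_simp at h
        linarith
      have hb0 : b0 = -1 := by
        rcases mul_eq_zero.mp h2 with h | h
        · linarith
        · exact absurd h hfac
      have hV0ne : V0 ≠ 0 := by
        intro h; rw [hb0, h] at hFb; norm_num at hFb
      have h3' : V0 * (1 - 1 / V0 ^ 2) + (a0 + V0) / (1 + (a0 + V0) ^ 2) = 0 := by
        rw [hb0, show ((-1:ℝ) + 1) ^ 2 + V0 ^ 2 = V0 ^ 2 by ring] at h3
        exact h3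
      have hd : (1 + (a0 + V0) ^ 2) ≠ 0 := by positivity
      have hd' : ((a0 + V0) ^ 2 + 1) ≠ 0 := by positivity
      have h1' : a0 * ((a0 + V0) ^ 2 + 1) + (a0 + V0) = 0 := by
        field_simp at h1; linarith
      have h3p : V0 * (V0 ^ 2 - 1) * (1 + (a0 + V0) ^ 2) + (a0 + V0) * V0 ^ 2 = 0 := by
        field_simp at h3'; linear_combination V0 * h3'
      have haV : a0 * V0 = V0 ^ 2 - 1 := by
        have key : ((a0+V0)^2+1) * (V0 * (a0*V0 - (V0^2-1))) = 0 := by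
          linear_combination V0^2 * h1' - h3p
        rcases mul_eq_zero.mp key with h | h
        · exact absurd h hd'
        · rcases mul_eq_zero.mp h with h | h
          · exact absurd h hV0ne
          · linarith
      have ha0 : a0 = (V0 ^ 2 - 1) / V0 := by
        rw [eq_div_iff hV0ne]; exact haV
      have hcube : 4 * (V0^2) ^ 3 - 5 * (V0^2) ^ 2 + 3 * (V0^2) - 1 = 0 := by
        linear_combination (V0^3) * h1' +
          (-a0^2*V0^2 - 3*a0*V0^3 + a0*V0 - 4*V0^4 + 2*V0^2 - 1) * haV
      have hVz : V0 ^ 2 = zs := huniq _ hcube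
      have hVpm : V0 = s ∨ V0 = -s := by
        have hpm : (V0 - s) * (V0 + s) = 0 := by
          linear_combination hVz - hs2
        rcases mul_eq_zero.mp hpm with h | h
        · left; linarith
        · right; linarith
      rcases hVpm with hV | hV
      · right; right; left
        rw [Prod.mk.injEq, Prod.mk.injEq]
        refine ⟨?_, hb0, hV⟩
        rw [ha0, hV, hs2]
      · right; right; right
        rw [Prod.mk.injEq, Prod.mk.injEq]
        refine ⟨?_, hb0, hV⟩
        rw [ha0, hV, ← hs2,
          show ((-s:ℝ)) ^ 2 - 1 = s ^ 2 - 1 by ring, div_neg]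
  · rintro (h | h | h | h) <;> rw [Prod.mk.injEq, Prod.mk.injEq] at h <;>
      obtain ⟨ha, hb, hV⟩ := h <;> subst ha hb hV
    · norm_num
    · norm_num
    · have hx : (zs - 1) / s + s = (2 * s ^ 2 - 1) / s := by
        rw [← hs2]; field_simp; ring
      refine ⟨?_, by norm_num, ?_⟩
      · rw [hx, ← hs2]
        field_simp
        linear_combination hzss
      · rw [hx, show ((-1:ℝ) + 1) ^ 2 + s ^ 2 = s ^ 2 by ring]
        field_simp
        linear_combination 1 * hzss
    · have hx : -((zs - 1) / s) + -s = -((2 * s ^ 2 - 1) / s) := by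
        rw [← hs2]; field_simp; ring
      refine ⟨?_, by norm_num, ?_⟩
      · rw [hx, ← hs2]
        field_simp
        linear_combination -hzss
      · rw [hx, show ((-1:ℝ) + 1) ^ 2 + (-s) ^ 2 = s ^ 2 by ring]
        field_simp
        linear_combination -1 * hzss
end

section
/- Define, for (a_0, b_0, a, V_0) ∈ ℝ × ℝ × ℂ × ℝ with F_b := (b_0 + 1)² + V_0² > 0, the function ReS(a_0, b_0, a, V_0) = a_0² + b_0² + 2b_0 + |a|² + V_0² + (1/2)·ln F_a − ln F_b, where x := a_0 + V_0 and F_a := x²(x² + 2(1 − |a|²)) + (1 + |a|²)² (note F_a > 0 for all arguments). Then the critical points of ReS (the points where its gradient, as a function of the five real variables a_0, b_0, Re a, Im a, V_0, vanishes) are exactly the four points with a = 0 and (a_0, b_0, V_0) ∈ { (0,0,0), (0,−2,0), ((z_s−1)/√z_s, −1, √z_s), (−(z_s−1)/√z_s, −1, −√z_s) }, where z_s is the unique real root of 4z³ − 5z² + 3z − 1. Moreover ReS = 0 at the first two critical points. -/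
noncomputable section

/-- The real part of the saddle point action of the flip matrix model at
`E = 0`, as a function of the five real variables
`(a₀, b₀, Re a, Im a, V₀)`:
`ReS = a₀² + b₀² + 2b₀ + |a|² + V₀² + (1/2) ln F_a - ln F_b`, where
`x = a₀ + V₀`, `F_a = x²(x² + 2(1 - |a|²)) + (1 + |a|²)²` and
`F_b = (b₀+1)² + V₀²`. -/
def ReS (p : ℝ × ℝ × ℝ × ℝ × ℝ) : ℝ :=
  p.1 ^ 2 + p.2.1 ^ 2 + 2 * p.2.1 + (p.2.2.1 ^ 2 + p.2.2.2.1 ^ 2) +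
      p.2.2.2.2 ^ 2 +
    (1 / 2) * Real.log
      ((p.1 + p.2.2.2.2) ^ 2 *
          ((p.1 + p.2.2.2.2) ^ 2 +
            2 * (1 - (p.2.2.1 ^ 2 + p.2.2.2.1 ^ 2))) +
        (1 + (p.2.2.1 ^ 2 + p.2.2.2.1 ^ 2)) ^ 2) -
    Real.log ((p.2.1 + 1) ^ 2 + p.2.2.2.2 ^ 2)

namespace FlipAux

abbrev EE := ℝ × ℝ × ℝ × ℝ × ℝ

def P1 : EE →L[ℝ] ℝ := ContinuousLinearMap.fst ℝ ℝ _
def P2 : EE →L[ℝ] ℝ := (ContinuousLinearMap.fst ℝ ℝ _).comp (ContinuousLinearMap.snd ℝ ℝ _)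
def P3 : EE →L[ℝ] ℝ := (ContinuousLinearMap.fst ℝ ℝ _).comp
  ((ContinuousLinearMap.snd ℝ ℝ _).comp (ContinuousLinearMap.snd ℝ ℝ _))
def P4 : EE →L[ℝ] ℝ := (ContinuousLinearMap.fst ℝ ℝ _).comp
  ((ContinuousLinearMap.snd ℝ ℝ _).comp
    ((ContinuousLinearMap.snd ℝ ℝ _).comp (ContinuousLinearMap.snd ℝ ℝ _)))
def P5 : EE →L[ℝ] ℝ := (ContinuousLinearMap.snd ℝ ℝ _).comp
  ((ContinuousLinearMap.snd ℝ ℝ _).comp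
    ((ContinuousLinearMap.snd ℝ ℝ _).comp (ContinuousLinearMap.snd ℝ ℝ _)))

def Fa (p : EE) : ℝ :=
  (p.1 + p.2.2.2.2) ^ 2 * ((p.1 + p.2.2.2.2) ^ 2 +
      2 * (1 - (p.2.2.1 ^ 2 + p.2.2.2.1 ^ 2))) +
    (1 + (p.2.2.1 ^ 2 + p.2.2.2.1 ^ 2)) ^ 2

def Fb (p : EE) : ℝ := (p.2.1 + 1) ^ 2 + p.2.2.2.2 ^ 2

def G1 (p : EE) : ℝ := 2 * p.1 +
  2 * (p.1 + p.2.2.2.2) * ((p.1 + p.2.2.2.2) ^ 2 + 1 - (p.2.2.1 ^ 2 + p.2.2.2.1 ^ 2)) / Fa p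
def G2 (p : EE) : ℝ := 2 * p.2.1 + 2 - 2 * (p.2.1 + 1) / Fb p
def G3 (p : EE) : ℝ := 2 * p.2.2.1 +
  2 * p.2.2.1 * (1 + (p.2.2.1 ^ 2 + p.2.2.2.1 ^ 2) - (p.1 + p.2.2.2.2) ^ 2) / Fa p
def G4 (p : EE) : ℝ := 2 * p.2.2.2.1 +
  2 * p.2.2.2.1 * (1 + (p.2.2.1 ^ 2 + p.2.2.2.1 ^ 2) - (p.1 + p.2.2.2.2) ^ 2) / Fa p
def G5 (p : EE) : ℝ := 2 * p.2.2.2.2 +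
  2 * (p.1 + p.2.2.2.2) * ((p.1 + p.2.2.2.2) ^ 2 + 1 - (p.2.2.1 ^ 2 + p.2.2.2.1 ^ 2)) / Fa p
  - 2 * p.2.2.2.2 / Fb p

lemma Fa_pos (p : EE) : 0 < Fa p := by
  have h1 := sq_nonneg ((p.1 + p.2.2.2.2) ^ 2 - (p.2.2.1 ^ 2 + p.2.2.2.1 ^ 2))
  have h2 := sq_nonneg (p.1 + p.2.2.2.2)
  have h3 := sq_nonneg p.2.2.1
  have h4 := sq_nonneg p.2.2.2.1
  unfold Fa; nlinarith

lemma key_pos (p : EE) :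
    0 < Fa p + (1 + (p.2.2.1 ^ 2 + p.2.2.2.1 ^ 2) - (p.1 + p.2.2.2.2) ^ 2) := by
  have h1 := sq_nonneg ((p.1 + p.2.2.2.2) ^ 2 - (p.2.2.1 ^ 2 + p.2.2.2.1 ^ 2))
  have h2 := sq_nonneg (p.1 + p.2.2.2.2)
  have h3 := sq_nonneg p.2.2.1
  have h4 := sq_nonneg p.2.2.2.1
  unfold Fa; nlinarith


lemma sq_fd {f : EE → ℝ} {f' : EE →L[ℝ] ℝ} {x : EE} (h : HasFDerivAt f f' x) :
    HasFDerivAt (fun q => f q ^ 2) ((2 * f x) • f') x := by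
  simpa [Function.comp_def] using (hasDerivAt_pow 2 (f x)).comp_hasFDerivAt x h

set_option maxHeartbeats 1000000 in
lemma hasFDerivReS (p : EE) (hb : Fb p ≠ 0) :
    HasFDerivAt ReS (G1 p • P1 + G2 p • P2 + G3 p • P3 + G4 p • P4 + G5 p • P5) p := by
  have h1 : HasFDerivAt (fun q : EE => q.1) P1 p := hasFDerivAt_fst
  have h2 : HasFDerivAt (fun q : EE => q.2.1) P2 p :=
    hasFDerivAt_fst.comp p hasFDerivAt_snd
  have h3 : HasFDerivAt (fun q : EE => q.2.2.1) P3 p :=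
    hasFDerivAt_fst.comp p (hasFDerivAt_snd.comp p hasFDerivAt_snd)
  have h4 : HasFDerivAt (fun q : EE => q.2.2.2.1) P4 p :=
    hasFDerivAt_fst.comp p (hasFDerivAt_snd.comp p (hasFDerivAt_snd.comp p hasFDerivAt_snd))
  have h5 : HasFDerivAt (fun q : EE => q.2.2.2.2) P5 p :=
    hasFDerivAt_snd.comp p (hasFDerivAt_snd.comp p (hasFDerivAt_snd.comp p hasFDerivAt_snd))
  have hx : HasFDerivAt (fun q : EE => q.1 + q.2.2.2.2) (P1 + P5) p := h1.add h5
  have hr : HasFDerivAt (fun q : EE => q.2.2.1 ^ 2 + q.2.2.2.1 ^ 2)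
      ((2 * p.2.2.1) • P3 + (2 * p.2.2.2.1) • P4) p :=
    ((sq_fd h3)).add ((sq_fd h4))
  have hFa := ((((sq_fd hx)).mul (((sq_fd hx)).add ((hasFDerivAt_const (1:ℝ) p).sub hr |>.const_mul 2))).add
      (sq_fd ((hasFDerivAt_const (1:ℝ) p).add hr)))
  have hFa' : HasFDerivAt Fa _ p := hFa
  have hFb : HasFDerivAt Fb _ p := (sq_fd (h2.add_const 1)).add ((sq_fd h5))
  have ha : Fa p ≠ 0 := ne_of_gt (Fa_pos p)
  have hlogFa := hFa'.log ha
  have hlogFb := hFb.log hb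
  have H := (((((((sq_fd h1)).add ((sq_fd h2))).add (h2.const_mul 2)).add hr).add ((sq_fd h5))).add
      (hlogFa.const_mul (1/2))).sub hlogFb
  refine H.congr_fderiv (ContinuousLinearMap.ext fun w => ?_)
  simp only [ContinuousLinearMap.add_apply, ContinuousLinearMap.smul_apply,
    ContinuousLinearMap.sub_apply, ContinuousLinearMap.coe_smul', Pi.smul_apply,
    smul_eq_mul, G1, G2, G3, G4, G5]
  simp [P1, P2, P3, P4, P5]
  field_simp
  ring


lemma cubic_unique' {z w : ℝ} (hz : 4*z^3 - 5*z^2 + 3*z - 1 = 0)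
    (hw : 4*w^3 - 5*w^2 + 3*w - 1 = 0) : z = w := by
  have h2 : (z - w) * (4*(z^2 + z*w + w^2) - 5*(z + w) + 3) = 0 := by
    linear_combination hz - hw
  have h3 : 0 < 4*(z^2 + z*w + w^2) - 5*(z + w) + 3 := by
    nlinarith [sq_nonneg (z - w), sq_nonneg (6*z + 6*w - 5)]
  rcases mul_eq_zero.mp h2 with h | h
  · linarith
  · linarith

lemma crit_s (s : ℝ) (hs : s ≠ 0) (hp : 4*s^6 - 5*s^4 + 3*s^2 - 1 = 0) :
    G1 ((s^2-1)/s, -1, 0, 0, s) = 0 ∧ G2 ((s^2-1)/s, -1, 0, 0, s) = 0 ∧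
    G3 ((s^2-1)/s, -1, 0, 0, s) = 0 ∧ G4 ((s^2-1)/s, -1, 0, 0, s) = 0 ∧
    G5 ((s^2-1)/s, -1, 0, 0, s) = 0 := by
  have hA := Fa_pos ((s^2-1)/s, -1, 0, 0, s)
  have hA' : Fa ((s^2-1)/s, -1, 0, 0, s) ≠ 0 := ne_of_gt hA
  have hFaval : Fa ((s^2-1)/s, -1, 0, 0, s) = (((s^2-1)/s + s)^2 + 1)^2 := by
    simp only [Fa]; ring
  have hx1 : ((s^2-1)/s + s)^2 + 1 ≠ 0 := by positivity
  refine ⟨?_, ?_, ?_, ?_, ?_⟩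
  · simp only [G1, hFaval]
    field_simp
    linear_combination (2*s^3*(4*s^4 - 3*s^2 + 1) + (2 - 6*s^2 - 2*s^3 + 8*s^4 + 6*s^5 - 8*s^7)) * hp
  · simp only [G2, Fb]
    norm_num
  · simp only [G3]; norm_num
  · simp only [G4]; norm_num
  · simp only [G5, hFaval, Fb]
    field_simp
    linear_combination (2*s^4*(4*s^4 - 3*s^2 + 1) + s*(2 - 6*s^2 - 2*s^3 + 8*s^4 + 6*s^5 - 8*s^7)) * hp

end FlipAux

open FlipAux

/-- on the domain `F_b > 0`, the critical points of `ReS`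
(vanishing gradient in the five real variables) are exactly the four points
with `a = 0` and `(a₀, b₀, V₀) ∈ {(0,0,0), (0,-2,0),
((z_s-1)/√z_s, -1, √z_s), (-(z_s-1)/√z_s, -1, -√z_s)}`, where `z_s` is the
unique real root of `4z³ - 5z² + 3z - 1`; moreover `ReS` vanishes at the
first two critical points. -/
theorem flip_action_critical_points (zs : ℝ)
    (hzs : 4 * zs ^ 3 - 5 * zs ^ 2 + 3 * zs - 1 = 0) :
    (∀ p : ℝ × ℝ × ℝ × ℝ × ℝ, 0 < (p.2.1 + 1) ^ 2 + p.2.2.2.2 ^ 2 →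
      (fderiv ℝ ReS p = 0 ↔
        (p = (0, 0, 0, 0, 0) ∨ p = (0, -2, 0, 0, 0) ∨
         p = ((zs - 1) / Real.sqrt zs, -1, 0, 0, Real.sqrt zs) ∨
         p = (-((zs - 1) / Real.sqrt zs), -1, 0, 0, -Real.sqrt zs)))) ∧
    ReS (0, 0, 0, 0, 0) = 0 ∧ ReS (0, -2, 0, 0, 0) = 0 := by
  have hzpos : 0 < zs := by
    by_contra h
    push_neg at h
    nlinarith [sq_nonneg zs]
  have hsq : Real.sqrt zs ^ 2 = zs := Real.sq_sqrt hzpos.le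
  have hspos : 0 < Real.sqrt zs := Real.sqrt_pos.mpr hzpos
  refine ⟨?_, ?_, ?_⟩
  · intro p hFb0
    obtain ⟨a, b, u, v, V⟩ := p
    simp only at hFb0
    have hb : Fb (a, b, u, v, V) ≠ 0 := by
      simpa [Fb] using ne_of_gt hFb0
    have H := hasFDerivReS (a, b, u, v, V) hb
    have hApos := Fa_pos (a, b, u, v, V)
    have hA : Fa (a, b, u, v, V) ≠ 0 := ne_of_gt hApos
    constructor
    · intro h0
      have hL0 : G1 (a,b,u,v,V) • P1 + G2 (a,b,u,v,V) • P2 + G3 (a,b,u,v,V) • P3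
          + G4 (a,b,u,v,V) • P4 + G5 (a,b,u,v,V) • P5 = 0 := by
        rw [← H.fderiv]; exact h0
      have E1 : G1 (a,b,u,v,V) = 0 := by
        have := congrArg (fun (L : EE →L[ℝ] ℝ) => L (1,0,0,0,0)) hL0
        simpa [P1, P2, P3, P4, P5] using this
      have E2 : G2 (a,b,u,v,V) = 0 := by
        have := congrArg (fun (L : EE →L[ℝ] ℝ) => L (0,1,0,0,0)) hL0
        simpa [P1, P2, P3, P4, P5] using this
      have E3 : G3 (a,b,u,v,V) = 0 := by
        have := congrArg (fun (L : EE →L[ℝ] ℝ) => L (0,0,1,0,0)) hL0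
        simpa [P1, P2, P3, P4, P5] using this
      have E4 : G4 (a,b,u,v,V) = 0 := by
        have := congrArg (fun (L : EE →L[ℝ] ℝ) => L (0,0,0,1,0)) hL0
        simpa [P1, P2, P3, P4, P5] using this
      have E5 : G5 (a,b,u,v,V) = 0 := by
        have := congrArg (fun (L : EE →L[ℝ] ℝ) => L (0,0,0,0,1)) hL0
        simpa [P1, P2, P3, P4, P5] using this
      -- u = 0 and v = 0
      have hkey := key_pos (a, b, u, v, V)
      simp only at hkey
      have hu : u = 0 := by
        simp only [G3] at E3
        have h2 : u * (Fa (a,b,u,v,V) + (1 + (u^2+v^2) - (a+V)^2)) = 0 := by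
          field_simp at E3
          linear_combination E3 / 2
        rcases mul_eq_zero.mp h2 with h | h
        · exact h
        · exfalso; rw [h] at hkey; exact lt_irrefl 0 hkey
      have hv : v = 0 := by
        simp only [G4] at E4
        have h2 : v * (Fa (a,b,u,v,V) + (1 + (u^2+v^2) - (a+V)^2)) = 0 := by
          field_simp at E4
          linear_combination E4 / 2
        rcases mul_eq_zero.mp h2 with h | h
        · exact h
        · exfalso; rw [h] at hkey; exact lt_irrefl 0 hkey
      subst hu hv
      have hFaval : Fa (a, b, 0, 0, V) = ((a+V)^2 + 1)^2 := by
        simp only [Fa]; ring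
      have hx1 : ((a+V)^2 + 1) ≠ 0 := by positivity
      have hE1' : a * ((a+V)^2 + 1) + (a+V) = 0 := by
        simp only [G1, hFaval] at E1
        have h2 : ((a+V)^2+1) * (a * ((a+V)^2 + 1) + (a+V)) = 0 := by
          field_simp at E1
          linear_combination E1 / 2
        rcases mul_eq_zero.mp h2 with h | h
        · exact absurd h hx1
        · exact h
      have hFbval : Fb (a, b, 0, 0, V) = (b+1)^2 + V^2 := rfl
      have hE5' : (V - a) * ((b+1)^2 + V^2) = V := by
        simp only [G5, hFaval, Fb] at E5
        field_simp at E5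
        have h2 : (((a+V)^2+1)^2) * ((V-a)*((b+1)^2+V^2) - V) = 0 := by
          linear_combination E5/2 - (((a+V)^2+1)*((b+1)^2+V^2)) * hE1'
        have h3 := (mul_eq_zero.mp h2).resolve_left (pow_ne_zero 2 hx1)
        linarith [h3]
      have hE2' : (b+1) * (((b+1)^2 + V^2) - 1) = 0 := by
        simp only [G2, Fb] at E2
        field_simp at E2
        linear_combination E2 / 2
      rcases mul_eq_zero.mp hE2' with hb1 | hB1
      · -- b = -1 branch
        have hbv : b = -1 := by linarith
        subst hbv
        have hV0 : V ≠ 0 := by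
          intro h; rw [h] at hFb0; norm_num at hFb0
        have hav : a * V = V^2 - 1 := by
          have h2 : V * ((V - a) * V - 1) = 0 := by
            linear_combination hE5'
          rcases mul_eq_zero.mp h2 with h | h
          · exact absurd h hV0
          · linarith [h]
            
        have ha' : a = (V^2 - 1)/V := by
          field_simp
          linear_combination hav
        have hpoly : 4*V^6 - 5*V^4 + 3*V^2 - 1 = 0 := by
          rw [ha'] at hE1'
          field_simp at hE1'
          have h2 : V * (4*V^6 - 5*V^4 + 3*V^2 - 1) = 0 := by linear_combination V * hE1'
          rcases mul_eq_zero.mp h2 with h | h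
          · exact absurd h hV0
          · exact h
        have hzV : 4*(V^2)^3 - 5*(V^2)^2 + 3*(V^2) - 1 = 0 := by linear_combination hpoly
        have hzeq : V^2 = zs := cubic_unique' hzV hzs
        have habs : Real.sqrt zs = |V| := by
          rw [← hzeq, Real.sqrt_sq_eq_abs]
        rcases lt_or_gt_of_ne hV0 with hVneg | hVpos
        · right; right; right
          have hsv : Real.sqrt zs = -V := by rw [habs, abs_of_neg hVneg]
          have ha2 : -((zs - 1)/Real.sqrt zs) = a := by
            rw [hsv, ← hzeq, ha', div_neg, neg_neg]
          simp only [Prod.mk.injEq]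
          refine ⟨ha2.symm, by norm_num, by norm_num, by norm_num, by rw [hsv]; ring⟩
        · right; right; left
          have hsv : Real.sqrt zs = V := by rw [habs, abs_of_pos hVpos]
          have ha2 : (zs - 1)/Real.sqrt zs = a := by
            rw [hsv, ← hzeq, ha']
          simp only [Prod.mk.injEq]
          refine ⟨ha2.symm, by norm_num, by norm_num, by norm_num, hsv.symm⟩
      · -- F_b = 1 branch
        have hB : (b+1)^2 + V^2 = 1 := by linarith
        have ha0 : a = 0 := by
          have := hE5'
          rw [hB] at this
          linarith [this]
        subst ha0
        have hV0 : V = 0 := by linear_combination hE1'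
        subst hV0
        have hb2 : b * (b + 2) = 0 := by linear_combination hB
        rcases mul_eq_zero.mp hb2 with h | h
        · left; simp [h]
        · right; left
          have : b = -2 := by linarith
          simp [this]
    · intro h
      have key : ∀ s : ℝ, s ≠ 0 → (4:ℝ)*s^6 - 5*s^4 + 3*s^2 - 1 = 0 →
          fderiv ℝ ReS ((s^2-1)/s, -1, 0, 0, s) = 0 := by
        intro s hs hp
        have hb' : Fb ((s^2-1)/s, -1, 0, 0, s) ≠ 0 := by
          simp [Fb]
          positivity
        rw [(hasFDerivReS _ hb').fderiv]
        obtain ⟨g1, g2, g3, g4, g5⟩ := crit_s s hs hp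
        rw [g1, g2, g3, g4, g5]
        simp
      have hp6 : ∀ s : ℝ, s^2 = zs → (4:ℝ)*s^6 - 5*s^4 + 3*s^2 - 1 = 0 := by
        intro s h2
        have : s^6 = zs^3 := by rw [show s^6 = (s^2)^3 by ring, h2]
        have h4 : s^4 = zs^2 := by rw [show s^4 = (s^2)^2 by ring, h2]
        rw [this, h4, h2]; exact hzs
      simp only [Prod.mk.injEq] at h
      rcases h with ⟨rfl,rfl,rfl,rfl,rfl⟩ | ⟨rfl,rfl,rfl,rfl,rfl⟩ | ⟨rfl,rfl,rfl,rfl,rfl⟩ | ⟨rfl,rfl,rfl,rfl,rfl⟩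
      · have hb' : Fb (0,0,0,0,0) ≠ 0 := by norm_num [Fb]
        rw [(hasFDerivReS _ hb').fderiv]
        have g1 : G1 (0,0,0,0,0) = 0 := by norm_num [G1, Fa]
        have g2 : G2 (0,0,0,0,0) = 0 := by norm_num [G2, Fb]
        have g3 : G3 (0,0,0,0,0) = 0 := by norm_num [G3, Fa]
        have g4 : G4 (0,0,0,0,0) = 0 := by norm_num [G4, Fa]
        have g5 : G5 (0,0,0,0,0) = 0 := by norm_num [G5, Fa, Fb]
        rw [g1, g2, g3, g4, g5]; simp
      · have hb' : Fb (0,-2,0,0,0) ≠ 0 := by norm_num [Fb]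
        rw [(hasFDerivReS _ hb').fderiv]
        have g1 : G1 (0,-2,0,0,0) = 0 := by norm_num [G1, Fa]
        have g2 : G2 (0,-2,0,0,0) = 0 := by norm_num [G2, Fb]
        have g3 : G3 (0,-2,0,0,0) = 0 := by norm_num [G3, Fa]
        have g4 : G4 (0,-2,0,0,0) = 0 := by norm_num [G4, Fa]
        have g5 : G5 (0,-2,0,0,0) = 0 := by norm_num [G5, Fa, Fb]
        rw [g1, g2, g3, g4, g5]; simp
      · have hpt : ((zs - 1)/Real.sqrt zs, (-1:ℝ), (0:ℝ), (0:ℝ), Real.sqrt zs)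
            = (((Real.sqrt zs)^2 - 1)/Real.sqrt zs, -1, 0, 0, Real.sqrt zs) := by
          rw [hsq]
        rw [hpt]
        exact key _ hspos.ne' (hp6 _ hsq)
      · have hsq' : (-Real.sqrt zs)^2 = zs := by rw [neg_pow]; simp [hsq]
        have hpt : (-((zs - 1)/Real.sqrt zs), (-1:ℝ), (0:ℝ), (0:ℝ), -Real.sqrt zs)
            = (((-Real.sqrt zs)^2 - 1)/(-Real.sqrt zs), -1, 0, 0, -Real.sqrt zs) := by
          rw [hsq', div_neg]
        rw [hpt]
        exact key _ (neg_ne_zero.mpr hspos.ne') (hp6 _ hsq')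
  · norm_num [ReS]
  · norm_num [ReS]
end
end

section
/- For every real z with 1/2 < z < 1, one has (2z − 1)(z − 1)/z + ln((4z² − z + 1)/z²) > −1/4 + ln(3/2) > 0.15. -/
lemma log_three_halves_gt : Real.log (3 / 2) > 0.4 := by
  rw [gt_iff_lt, show (0.4 : ℝ) = 2 / 5 by norm_num,
    Real.lt_log_iff_exp_lt (by norm_num : (0:ℝ) < 3 / 2)]
  have h5 : Real.exp (2 / 5) ^ 5 < (3 / 2) ^ 5 := by
    have : Real.exp (2 / 5) ^ 5 = Real.exp 1 ^ 2 := by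
      rw [← Real.exp_nat_mul, ← Real.exp_nat_mul]; norm_num
    rw [this]
    have he := Real.exp_one_lt_d9
    nlinarith [Real.exp_pos 1]
  exact lt_of_pow_lt_pow_left₀ 5 (by norm_num) h5

/-- for every real `z` with `1/2 < z < 1`,
`(2z-1)(z-1)/z + ln((4z² - z + 1)/z²) > -1/4 + ln(3/2) > 0.15`. -/
theorem saddle_action_lower_bound (z : ℝ) (h1 : 1 / 2 < z) (h2 : z < 1) :
    (2 * z - 1) * (z - 1) / z + Real.log ((4 * z ^ 2 - z + 1) / z ^ 2) >
      -(1 / 4) + Real.log (3 / 2) ∧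
    -(1 / 4) + Real.log (3 / 2) > 0.15 := by
  have hz : 0 < z := by linarith
  constructor
  · have hA : -(1 / 4) < (2 * z - 1) * (z - 1) / z := by
      rw [lt_div_iff₀ hz]
      nlinarith [sq_nonneg (z - 11 / 16)]
    have hB : Real.log (3 / 2) ≤ Real.log ((4 * z ^ 2 - z + 1) / z ^ 2) := by
      apply Real.log_le_log (by norm_num)
      rw [le_div_iff₀ (by positivity)]
      nlinarith [sq_nonneg z, sq_nonneg (z - 1)]
    linarith
  · linarith [log_three_halves_gt]
end

section
/- Let E be real with E² < 2, and set ℰ_r = E/2 and ℰ_i = √(1 − E²/4). Then the real symmetric 4×4 matrix H = [[2ℰ_i², 0, ℰ_i² − ℰ_r², 0], [0, 2ℰ_i², 2ℰ_rℰ_i, 0], [ℰ_i² − ℰ_r², 2ℰ_rℰ_i, 1, 0], [0, 0, 0, 2ℰ_i²]] is positive definite. -/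
open Matrix

noncomputable section

/-- for real `E` with `E² < 2`, setting `ℰ_r = E/2` and
`ℰ_i = √(1 - E²/4)`, the real symmetric 4×4 Hessian matrix
`[[2ℰ_i², 0, ℰ_i² - ℰ_r², 0], [0, 2ℰ_i², 2ℰ_rℰ_i, 0],
[ℰ_i² - ℰ_r², 2ℰ_rℰ_i, 1, 0], [0, 0, 0, 2ℰ_i²]]` is positive definite. -/
theorem hessian_posDef (E : ℝ) (hE : E ^ 2 < 2) :
    Matrix.PosDef
      (!![2 * Real.sqrt (1 - E ^ 2 / 4) ^ 2, 0,
            Real.sqrt (1 - E ^ 2 / 4) ^ 2 - (E / 2) ^ 2, 0;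
          0, 2 * Real.sqrt (1 - E ^ 2 / 4) ^ 2,
            2 * (E / 2) * Real.sqrt (1 - E ^ 2 / 4), 0;
          Real.sqrt (1 - E ^ 2 / 4) ^ 2 - (E / 2) ^ 2,
            2 * (E / 2) * Real.sqrt (1 - E ^ 2 / 4), 1, 0;
          0, 0, 0, 2 * Real.sqrt (1 - E ^ 2 / 4) ^ 2]) := by
  have h1 : (0:ℝ) < 1 - E ^ 2 / 4 := by nlinarith
  have hs : Real.sqrt (1 - E ^ 2 / 4) ^ 2 = 1 - E ^ 2 / 4 :=
    Real.sq_sqrt h1.le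
  set s := Real.sqrt (1 - E ^ 2 / 4) with hsdef
  refine Matrix.PosDef.of_dotProduct_mulVec_pos ?_ ?_
  · ext i j
    fin_cases i <;> fin_cases j <;>
      simp [Matrix.conjTranspose_apply]
  · intro x hx
    have hx4 : 0 < x 0 ^ 2 + x 1 ^ 2 + x 2 ^ 2 + x 3 ^ 2 := by
      rcases Function.ne_iff.mp hx with ⟨i, hi⟩
      have hi' : x i ≠ 0 := hi
      have h2 : 0 < x i ^ 2 := by
        rw [← sq_abs]; exact pow_pos (abs_pos.mpr hi') 2
      have h3 : x i ^ 2 ≤ ∑ j, x j ^ 2 :=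
        Finset.single_le_sum (fun j _ => sq_nonneg (x j)) (Finset.mem_univ i)
      rw [Fin.sum_univ_four] at h3
      linarith
    simp [dotProduct, Matrix.mulVec, Fin.sum_univ_four,
      Matrix.cons_val_zero, Matrix.cons_val_one, Matrix.head_cons]
    rw [hs]
    rcases eq_or_ne (x 2) 0 with hc | hc
    · rw [hc]
      have hx3 : 0 < x 0 ^ 2 + x 1 ^ 2 + x 3 ^ 2 := by
        rw [hc] at hx4; nlinarith [hx4]
      nlinarith [hx3, h1, mul_pos h1 hx3]
    · have hc2 : 0 < x 2 ^ 2 := by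
        rw [← sq_abs]; exact pow_pos (abs_pos.mpr hc) 2
      have h2 : (0:ℝ) < 2 * (1 - E ^ 2 / 4) - 1 := by nlinarith
      have hEs2 : E ^ 2 * s ^ 2 * x 2 ^ 2 = E ^ 2 * (1 - E ^ 2 / 4) * x 2 ^ 2 := by
        rw [hs]
      nlinarith [sq_nonneg (2 * (1 - E ^ 2 / 4) * x 0 + (1 - E ^ 2 / 4 - E ^ 2 / 4) * x 2),
        sq_nonneg (2 * (1 - E ^ 2 / 4) * x 1 + E * s * x 2),
        mul_pos h2 hc2, h1, hEs2,
        mul_nonneg (mul_nonneg h1.le h1.le) (sq_nonneg (x 3)),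
        mul_pos h1 h1, sq_nonneg (x 0), sq_nonneg (x 1)]
end
end
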